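/- Let W = (w_{ij}) be an n×n doubly stochastic matrix with nonnegative entries, and suppose there exist constants γ > 0 and λ ∈ (0,1) such that |[W^k]_{ij} − 1/n| ≤ γ λ^k for all i, j ∈ {1,…,n} and all integers k ≥ 1. Let (x_i^t)_{t≥1} ⊆ ℝ^d (i = 1,…,n) be sequences satisfying x_i^{t+1} = Σ_{j=1}^{n} w_{ij} x_j^t + ε_{i,t} for all t ≥ 1, where ε_{i,t} := x_i^{t+1} − Σ_{j=1}^{n} w_{ij} x_j^t, and set x̄^t := (1/n) Σ_{i=1}^{n} x_i^t. Then for all i ∈ {1,…,n} and all t ≥ 2: ‖x_i^t − x̄^t‖ ≤ γ λ^{t−2} Σ_{j=1}^{n} ‖x_j^1‖ + (1/n) Σ_{j=1}^{n} ‖ε_{j,t−1}‖ + ‖ε_{i,t−1}‖ + γ Σ_{s=1}^{t−2} λ^{t−s−2} Σ_{j=1}^{n} ‖ε_{j,s}‖. -/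

import Mathlib

/-- Lemma 3 of the paper. Let `W` be an `n × n` doubly stochastic
matrix whose powers satisfy the geometric mixing bound `|[W^k]_{ij} - 1/n| ≤ γ λ^k`.
If the iterates satisfy `x_i^{t+1} = ∑_j w_{ij} x_j^t + ε_{i,t}` (i.e. `ε_{i,t}` is the
deviation of `x_i^{t+1}` from the consensus step) and `x̄^t = (1/n) ∑_i x_i^t`, then
for every agent `i` and every `t ≥ 2`,
`‖x_i^t - x̄^t‖ ≤ γ λ^{t-2} ∑_j ‖x_j^1‖ + (1/n) ∑_j ‖ε_{j,t-1}‖ + ‖ε_{i,t-1}‖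
  + γ ∑_{s=1}^{t-2} λ^{t-s-2} ∑_j ‖ε_{j,s}‖`. -/
theorem stmt_10 {d n : ℕ} (hn : 0 < n)
    (W : Matrix (Fin n) (Fin n) ℝ)
    (hpos : ∀ i j, 0 ≤ W i j)
    (hrow : ∀ i, ∑ j, W i j = 1)
    (hcol : ∀ j, ∑ i, W i j = 1)
    (γ lam : ℝ) (hγ : 0 < γ) (hlam0 : 0 < lam) (hlam1 : lam < 1)
    (hmix : ∀ k : ℕ, 1 ≤ k → ∀ i j, |(W ^ k) i j - 1 / (n : ℝ)| ≤ γ * lam ^ k)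
    (x ε : ℕ → Fin n → EuclideanSpace ℝ (Fin d))
    (hε : ∀ t, 1 ≤ t → ∀ i, ε t i = x (t + 1) i - ∑ j, W i j • x t j)
    (xbar : ℕ → EuclideanSpace ℝ (Fin d))
    (hxbar : ∀ t, xbar t = (1 / (n : ℝ)) • ∑ i, x t i) :
    ∀ i, ∀ t, 2 ≤ t →
      ‖x t i - xbar t‖
        ≤ γ * lam ^ (t - 2) * ∑ j, ‖x 1 j‖
          + (1 / (n : ℝ)) * ∑ j, ‖ε (t - 1) j‖
          + ‖ε (t - 1) i‖
          + γ * ∑ s ∈ Finset.Icc 1 (t - 2), lam ^ (t - s - 2) * ∑ j, ‖ε s j‖ := by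
  -- column sums of powers
  have hcolpow : ∀ k : ℕ, ∀ j, ∑ i, (W ^ k) i j = 1 := by
    intro k
    induction k with
    | zero => intro j; simp [Matrix.one_apply]
    | succ k ih =>
      intro j
      have : W ^ (k + 1) = W ^ k * W := pow_succ W k
      simp only [this, Matrix.mul_apply]
      rw [Finset.sum_comm]
      simp only [← Finset.sum_mul, ih]
      simpa using hcol j
  -- recursion
  have hrec : ∀ t, 1 ≤ t → ∀ i, x (t + 1) i = (∑ j, W i j • x t j) + ε t i := by
    intro t ht i
    have := hε t ht i
    rw [this]; abel
  -- unrolled recursion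
  have unroll : ∀ m : ℕ, ∀ i,
      x (m + 1) i = (∑ j, (W ^ m) i j • x 1 j)
        + ∑ s ∈ Finset.Icc 1 m, ∑ j, (W ^ (m - s)) i j • ε s j := by
    intro m
    induction m with
    | zero => intro i; simp [Matrix.one_apply]
    | succ m ih =>
      intro i
      rw [hrec (m + 1) (by omega) i]
      have step : (∑ j, W i j • x (m + 1) j)
          = (∑ j, (W ^ (m + 1)) i j • x 1 j)
            + ∑ s ∈ Finset.Icc 1 m, ∑ j, (W ^ (m + 1 - s)) i j • ε s j := by
        calc ∑ j, W i j • x (m + 1) j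
            = ∑ j, W i j • ((∑ k, (W ^ m) j k • x 1 k)
                + ∑ s ∈ Finset.Icc 1 m, ∑ k, (W ^ (m - s)) j k • ε s k) := by
              simp only [← ih]
          _ = (∑ j, ∑ k, (W i j * (W ^ m) j k) • x 1 k)
                + ∑ j, ∑ s ∈ Finset.Icc 1 m, ∑ k, (W i j * (W ^ (m - s)) j k) • ε s k := by
              simp [smul_add, Finset.smul_sum, mul_smul, Finset.sum_add_distrib]
          _ = (∑ k, (W ^ (m + 1)) i k • x 1 k)
                + ∑ s ∈ Finset.Icc 1 m, ∑ k, (W ^ (m + 1 - s)) i k • ε s k := by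
              congr 1
              · rw [Finset.sum_comm]
                refine Finset.sum_congr rfl fun k _ => ?_
                rw [pow_succ' W m, Matrix.mul_apply, Finset.sum_smul]
              · rw [Finset.sum_comm]
                refine Finset.sum_congr rfl fun s hs => ?_
                rw [Finset.sum_comm]
                refine Finset.sum_congr rfl fun k _ => ?_
                have hs' : s ≤ m := (Finset.mem_Icc.mp hs).2
                have : m + 1 - s = (m - s) + 1 := by omega
                rw [this, pow_succ' W (m - s), Matrix.mul_apply, Finset.sum_smul]
      rw [step]
      have hins : Finset.Icc 1 (m + 1) = insert (m + 1) (Finset.Icc 1 m) := by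
        ext a; simp [Finset.mem_Icc]; omega
      rw [hins, Finset.sum_insert (by simp)]
      have h0 : ∑ j, (W ^ (m + 1 - (m + 1))) i j • ε (m + 1) j = ε (m + 1) i := by
        simp [Matrix.one_apply]
      rw [h0]
      abel
  intro i t ht
  obtain ⟨m, hm, rfl⟩ : ∃ m, 1 ≤ m ∧ t = m + 1 := ⟨t - 1, by omega, by omega⟩
  -- average
  have havg : xbar (m + 1) = (∑ j, (1 / (n : ℝ)) • x 1 j)
      + ∑ s ∈ Finset.Icc 1 m, ∑ j, (1 / (n : ℝ)) • ε s j := by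
    rw [hxbar]
    have : ∑ i, x (m + 1) i
        = (∑ j, x 1 j) + ∑ s ∈ Finset.Icc 1 m, ∑ j, ε s j := by
      calc ∑ i, x (m + 1) i
          = ∑ i, ((∑ j, (W ^ m) i j • x 1 j)
              + ∑ s ∈ Finset.Icc 1 m, ∑ j, (W ^ (m - s)) i j • ε s j) := by
            exact Finset.sum_congr rfl fun i _ => unroll m i
        _ = (∑ j, (∑ i, (W ^ m) i j) • x 1 j)
              + ∑ s ∈ Finset.Icc 1 m, ∑ j, (∑ i, (W ^ (m - s)) i j) • ε s j := by
            rw [Finset.sum_add_distrib]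
            congr 1
            · rw [Finset.sum_comm]
              exact Finset.sum_congr rfl fun j _ => (Finset.sum_smul ..).symm
            · rw [Finset.sum_comm]
              refine Finset.sum_congr rfl fun s _ => ?_
              rw [Finset.sum_comm]
              exact Finset.sum_congr rfl fun j _ => (Finset.sum_smul ..).symm
        _ = (∑ j, x 1 j) + ∑ s ∈ Finset.Icc 1 m, ∑ j, ε s j := by
            simp [hcolpow]
    rw [this]
    simp only [smul_add, Finset.smul_sum]
  -- difference
  have hdiff : x (m + 1) i - xbar (m + 1)
      = (∑ j, ((W ^ m) i j - 1 / (n : ℝ)) • x 1 j)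
        + ∑ s ∈ Finset.Icc 1 m, ∑ j, ((W ^ (m - s)) i j - 1 / (n : ℝ)) • ε s j := by
    rw [unroll m i, havg]
    simp only [sub_smul, Finset.sum_sub_distrib]
    abel
  -- split off s = m
  have hsplit : Finset.Icc 1 m = insert m (Finset.Icc 1 (m - 1)) := by
    ext a; simp [Finset.mem_Icc]; omega
  have hmem : m ∉ Finset.Icc 1 (m - 1) := by simp; omega
  rw [hdiff, hsplit, Finset.sum_insert hmem]
  -- the s = m term equals ε m i - (1/n) • ∑ ε m j
  have hlast : ∑ j, ((W ^ (m - m)) i j - 1 / (n : ℝ)) • ε m j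
      = ε m i - ∑ j, (1 / (n : ℝ)) • ε m j := by
    simp [Nat.sub_self, Matrix.one_apply, sub_smul, Finset.sum_sub_distrib,
      Finset.sum_ite_eq]
  rw [hlast]
  -- norm bounds
  have key : ∀ (k : ℕ), 1 ≤ k → ∀ (v : Fin n → EuclideanSpace ℝ (Fin d)),
      ‖∑ j, ((W ^ k) i j - 1 / (n : ℝ)) • v j‖ ≤ γ * lam ^ k * ∑ j, ‖v j‖ := by
    intro k hk v
    calc ‖∑ j, ((W ^ k) i j - 1 / (n : ℝ)) • v j‖
        ≤ ∑ j, ‖((W ^ k) i j - 1 / (n : ℝ)) • v j‖ := norm_sum_le _ _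
      _ ≤ ∑ j, (γ * lam ^ k) * ‖v j‖ := by
          refine Finset.sum_le_sum fun j _ => ?_
          rw [norm_smul, Real.norm_eq_abs]
          exact mul_le_mul_of_nonneg_right (hmix k hk i j) (norm_nonneg _)
      _ = γ * lam ^ k * ∑ j, ‖v j‖ := by rw [Finset.mul_sum]
  have hεnonneg : ∀ s : ℕ, (0:ℝ) ≤ ∑ j, ‖ε s j‖ :=
    fun s => Finset.sum_nonneg fun j _ => norm_nonneg _
  have hlampow : ∀ a b : ℕ, a ≤ b → lam ^ b ≤ lam ^ a :=
    fun a b h => pow_le_pow_of_le_one hlam0.le hlam1.le h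
  -- bound on first term
  have h1 : ‖∑ j, ((W ^ m) i j - 1 / (n : ℝ)) • x 1 j‖
      ≤ γ * lam ^ (m + 1 - 2) * ∑ j, ‖x 1 j‖ := by
    refine (key m hm _).trans ?_
    have hle : lam ^ m ≤ lam ^ (m + 1 - 2) := hlampow _ _ (by omega)
    have hx : (0:ℝ) ≤ ∑ j, ‖x 1 j‖ := Finset.sum_nonneg fun j _ => norm_nonneg _
    exact mul_le_mul_of_nonneg_right (mul_le_mul_of_nonneg_left hle hγ.le) hx
  -- bound on the tail sum
  have h2 : ‖∑ s ∈ Finset.Icc 1 (m - 1), ∑ j, ((W ^ (m - s)) i j - 1 / (n : ℝ)) • ε s j‖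
      ≤ γ * ∑ s ∈ Finset.Icc 1 (m - 1), lam ^ (m + 1 - s - 2) * ∑ j, ‖ε s j‖ := by
    calc ‖∑ s ∈ Finset.Icc 1 (m - 1), ∑ j, ((W ^ (m - s)) i j - 1 / (n : ℝ)) • ε s j‖
        ≤ ∑ s ∈ Finset.Icc 1 (m - 1), ‖∑ j, ((W ^ (m - s)) i j - 1 / (n : ℝ)) • ε s j‖ :=
          norm_sum_le _ _
      _ ≤ ∑ s ∈ Finset.Icc 1 (m - 1), γ * (lam ^ (m + 1 - s - 2) * ∑ j, ‖ε s j‖) := by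
          refine Finset.sum_le_sum fun s hs => ?_
          obtain ⟨hs1, hs2⟩ := Finset.mem_Icc.mp hs
          refine (key (m - s) (by omega) _).trans ?_
          have hle : lam ^ (m - s) ≤ lam ^ (m + 1 - s - 2) := hlampow _ _ (by omega)
          rw [← mul_assoc]
          exact mul_le_mul_of_nonneg_right
            (mul_le_mul_of_nonneg_left hle hγ.le) (hεnonneg s)
      _ = γ * ∑ s ∈ Finset.Icc 1 (m - 1), lam ^ (m + 1 - s - 2) * ∑ j, ‖ε s j‖ := by
          rw [Finset.mul_sum]
  -- bound on last piece
  have h3 : ‖ε m i - ∑ j, (1 / (n : ℝ)) • ε m j‖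
      ≤ (1 / (n : ℝ)) * (∑ j, ‖ε m j‖) + ‖ε m i‖ := by
    calc ‖ε m i - ∑ j, (1 / (n : ℝ)) • ε m j‖
        ≤ ‖ε m i‖ + ‖∑ j, (1 / (n : ℝ)) • ε m j‖ := norm_sub_le _ _
      _ ≤ ‖ε m i‖ + (1 / (n : ℝ)) * ∑ j, ‖ε m j‖ := by
          gcongr
          refine (norm_sum_le _ _).trans ?_
          refine le_of_eq ?_
          rw [Finset.mul_sum]
          refine Finset.sum_congr rfl fun j _ => ?_
          rw [norm_smul, Real.norm_eq_abs, abs_of_nonneg (by positivity)]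
      _ = (1 / (n : ℝ)) * (∑ j, ‖ε m j‖) + ‖ε m i‖ := by ring
  have hsimp1 : m + 1 - 1 = m := by omega
  have hsimp2 : m + 1 - 2 = m - 1 := by omega
  rw [hsimp1, hsimp2]
  calc ‖(∑ j, ((W ^ m) i j - 1 / (n : ℝ)) • x 1 j)
        + ((ε m i - ∑ j, (1 / (n : ℝ)) • ε m j)
          + ∑ s ∈ Finset.Icc 1 (m - 1), ∑ j, ((W ^ (m - s)) i j - 1 / (n : ℝ)) • ε s j)‖
      ≤ ‖∑ j, ((W ^ m) i j - 1 / (n : ℝ)) • x 1 j‖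
        + (‖ε m i - ∑ j, (1 / (n : ℝ)) • ε m j‖
          + ‖∑ s ∈ Finset.Icc 1 (m - 1), ∑ j, ((W ^ (m - s)) i j - 1 / (n : ℝ)) • ε s j‖) := by
        refine (norm_add_le _ _).trans ?_
        gcongr
        exact norm_add_le _ _
    _ ≤ γ * lam ^ (m - 1) * ∑ j, ‖x 1 j‖
        + (((1 / (n : ℝ)) * (∑ j, ‖ε m j‖) + ‖ε m i‖)
          + γ * ∑ s ∈ Finset.Icc 1 (m - 1), lam ^ (m + 1 - s - 2) * ∑ j, ‖ε s j‖) := by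
        rw [hsimp2] at h1
        exact add_le_add h1 (add_le_add h3 h2)
    _ = γ * lam ^ (m - 1) * ∑ j, ‖x 1 j‖
        + (1 / (n : ℝ)) * ∑ j, ‖ε m j‖
        + ‖ε m i‖
        + γ * ∑ s ∈ Finset.Icc 1 (m - 1), lam ^ (m + 1 - s - 2) * ∑ j, ‖ε s j‖ := by ring
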